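/- In a chart with a LLEE-witness, if there is a path from v starting with an α-level entry transition and then arbitrary transitions, all of whose targets avoid v, ending at w, then there is an acyclic path from v to w of the form v ↓_α · ↓* w (an α-descends step followed by finitely many descends-in-loop-to steps). -/

import Mathlib

/-- An entry/body-labeled finite chart: a rooted labelled transition system with
termination sink `tick` (√), start vertex `start`, and transitions carrying an
action from `A` together with a marking label in ℕ (label `0` marks body
transitions, positive labels mark entry transitions).  Every vertex other than
possibly `tick` is reachable from the start vertex. -/
structure LChart (V : Type) (A : Type) : Type where
  tick : V
  start : V
  Tr : V → A → ℕ → V → Prop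
  tick_no_out : ∀ (a : A) (n : ℕ) (w : V), ¬ Tr tick a n w
  start_ne_tick : start ≠ tick
  connected : ∀ v : V, v = tick ∨
    Relation.ReflTransGen (fun x y => ∃ (a : A) (n : ℕ), Tr x a n y) start v

namespace LChart

variable {V A : Type}

/-- Body transition step (marking label `0`). -/
def BStep (C : LChart V A) (x y : V) : Prop := ∃ a : A, C.Tr x a 0 y

/-- Entry transition step of level `α > 0`. -/
def EStep (C : LChart V A) (α : ℕ) (x y : V) : Prop := 0 < α ∧ ∃ a : A, C.Tr x a α y

/-- A transition step of any kind. -/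
def AnyStep (C : LChart V A) (x y : V) : Prop := ∃ (a : A) (n : ℕ), C.Tr x a n y

/-- There is an entry transition of level `α` departing from `v`. -/
def HasEntry (C : LChart V A) (v : V) (α : ℕ) : Prop :=
  0 < α ∧ ∃ (a : A) (w : V), C.Tr v a α w

/-- `v` descends in a loop of level `α` to `w`: there is a path from `v` to `w`
starting with an `α`-entry transition and continuing with body transitions, in
which all transition targets avoid `v`. -/
def Descends (C : LChart V A) (v : V) (α : ℕ) (w : V) : Prop :=
  ∃ u : V, C.EStep α v u ∧ u ≠ v ∧
    Relation.ReflTransGen (fun x y => C.BStep x y ∧ y ≠ v) u w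

/-- `v` descends in a loop to `w` (at some level). -/
def Desc (C : LChart V A) (v w : V) : Prop := ∃ α : ℕ, C.Descends v α w

/-- An infinite path from `v` in the loop subchart `C[v,α]`: it starts at `v`,
takes an `α`-entry transition whenever it is at `v`, and body transitions
otherwise. -/
def LoopSeq (C : LChart V A) (v : V) (α : ℕ) (f : ℕ → V) : Prop :=
  f 0 = v ∧ ∀ n : ℕ,
    (f n = v → C.EStep α (f n) (f (n + 1))) ∧ (f n ≠ v → C.BStep (f n) (f (n + 1)))

/-- The conditions (W1), (W2)(a) (the subchart `C[v,α]` is a loop chart, i.e.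
(L1) an infinite path from `v` exists, (L2) every infinite path from `v`
returns to `v` after a positive number of steps, (L3) √ is not a vertex of
`C[v,α]`), and (W2)(b) (layeredness) for an entry/body-labeling to be a
LLEE-witness. -/
structure IsLLEE (C : LChart V A) : Prop where
  w1 : ¬ ∃ f : ℕ → V, f 0 = C.start ∧ ∀ n : ℕ, C.BStep (f n) (f (n + 1))
  w2a_L1 : ∀ (v : V) (α : ℕ), C.HasEntry v α → ∃ f : ℕ → V, C.LoopSeq v α f
  w2a_L2 : ∀ (v : V) (α : ℕ), C.HasEntry v α →
    ∀ f : ℕ → V, C.LoopSeq v α f → ∃ n : ℕ, 0 < n ∧ f n = v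
  w2a_L3 : ∀ (v : V) (α : ℕ), ¬ C.Descends v α C.tick
  w2b : ∀ (v w : V) (α : ℕ), C.Descends v α w → ∀ β : ℕ, α ≤ β → ¬ C.HasEntry w β

/-- `u` and `v` lie in the same strongly connected component. -/
def SameSCC (C : LChart V A) (u v : V) : Prop :=
  Relation.ReflTransGen C.AnyStep u v ∧ Relation.ReflTransGen C.AnyStep v u

/-- `w` loops back to `v`: `v` descends in a loop to `w` and there is a nonempty
path of body transitions from `w` back to `v`. -/
def LoopsBack (C : LChart V A) (w v : V) : Prop :=
  C.Desc v w ∧ Relation.TransGen C.BStep w v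

/-- `w` directly loops back to `v`. -/
def DLoopsBack (C : LChart V A) (w v : V) : Prop :=
  C.LoopsBack w v ∧ ∀ u : V, C.LoopsBack w u → u = v ∨ C.LoopsBack v u

end LChart

/-- Truncate a chain at the first element equal to `y`. -/
theorem chain_trunc {V : Type} {R : V → V → Prop} :
    ∀ (xs : List V) (u : V), List.Chain R u xs → ∀ y ∈ u :: xs,
      ∃ xs', List.Chain R u xs' ∧ (u :: xs').getLast (List.cons_ne_nil u xs') = y ∧
        (u :: xs') <+: (u :: xs) := by
  intro xs
  induction xs with
  | nil =>
    intro u _ y hy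
    simp only [List.mem_singleton] at hy
    exact ⟨[], List.Chain.nil, by simp [hy], by simp⟩
  | cons b t ih =>
    intro u hc y hy
    rcases List.mem_cons.1 hy with rfl | hy'
    · exact ⟨[], List.Chain.nil, by simp, ⟨b :: t, rfl⟩⟩
    · obtain ⟨hub, hcb⟩ := List.chain_cons.1 hc
      obtain ⟨xs'', h1, h2, h3⟩ := ih b hcb y hy'
      refine ⟨b :: xs'', List.chain_cons.2 ⟨hub, h1⟩, ?_, ?_⟩
      · rw [List.getLast_cons (List.cons_ne_nil b xs'')]; exact h2
      · obtain ⟨r, hr⟩ := h3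
        exact ⟨r, by rw [← hr]; rfl⟩

/-- Append one step to the end of a chain. -/
theorem chain_snoc {V : Type} {R : V → V → Prop} :
    ∀ (xs : List V) (u y : V), List.Chain R u xs →
      R ((u :: xs).getLast (List.cons_ne_nil u xs)) y → List.Chain R u (xs ++ [y]) := by
  intro xs
  induction xs with
  | nil =>
    intro u y _ hr
    simp only [List.getLast_singleton] at hr
    exact List.chain_cons.2 ⟨hr, List.Chain.nil⟩
  | cons b t ih =>
    intro u y hc hr
    obtain ⟨hub, hcb⟩ := List.chain_cons.1 hc
    rw [List.getLast_cons (List.cons_ne_nil b t)] at hr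
    exact List.chain_cons.2 ⟨hub, ih b y hcb hr⟩

/-- Replace the last element of a nonempty chain by `y`, given that every
possible predecessor relation to the old last element transfers to `y`. -/
theorem chain_replace_last {V : Type} {R : V → V → Prop} :
    ∀ (xs : List V) (u y : V) (hne : xs ≠ []), List.Chain R u xs →
      (∀ p ∈ u :: xs, R p (xs.getLast hne) → R p y) →
      List.Chain R u (xs.dropLast ++ [y]) := by
  intro xs
  induction xs with
  | nil => intro u y hne; exact absurd rfl hne
  | cons b t ih =>
    intro u y _ hc hrepl
    obtain ⟨hub, hcb⟩ := List.chain_cons.1 hc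
    rcases t with - | ⟨c, t'⟩
    · show List.Chain R u [y]
      refine List.chain_cons.2 ⟨?_, List.Chain.nil⟩
      exact hrepl u (by simp) (by simpa using hub)
    · have hne' : c :: t' ≠ [] := List.cons_ne_nil c t'
      have : List.Chain R b ((c :: t').dropLast ++ [y]) := by
        refine ih b y hne' hcb ?_
        intro p hp hr
        refine hrepl p ?_ ?_
        · rcases List.mem_cons.1 hp with rfl | hp'
          · simp
          · simp only [List.mem_cons] at hp' ⊢; tauto
        · rwa [List.getLast_cons hne']
      rw [List.dropLast_cons₂, List.cons_append]
      exact List.chain_cons.2 ⟨hub, this⟩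

/-- If there is a path from `v` starting with an `α`-level entry transition and then
arbitrary transitions, all of whose targets avoid `v`, ending at `w`, then there is
an acyclic path from `v` to `w` consisting of an `α`-descends step followed by
finitely many descends-in-loop-to steps. -/
theorem to_descends_path {V A : Type} [Finite V] (C : LChart V A) (h : C.IsLLEE)
    (v w : V) (α : ℕ)
    (hp : ∃ u : V, C.EStep α v u ∧ u ≠ v ∧
      Relation.ReflTransGen (fun x y => C.AnyStep x y ∧ y ≠ v) u w) :
    ∃ (u : V) (xs : List V),
      C.Descends v α u ∧ List.Chain C.Desc u xs ∧
      (u :: xs).getLast (List.cons_ne_nil u xs) = w ∧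
      (v :: u :: xs).Nodup := by
  obtain ⟨u, he, hne, hpath⟩ := hp
  have main : ∀ x, Relation.ReflTransGen (fun a b => C.AnyStep a b ∧ b ≠ v) x w →
      ∀ (u : V) (xs : List V), C.Descends v α u → List.Chain C.Desc u xs →
        (u :: xs).getLast (List.cons_ne_nil u xs) = x → (v :: u :: xs).Nodup →
        ∃ (u : V) (xs : List V),
          C.Descends v α u ∧ List.Chain C.Desc u xs ∧
          (u :: xs).getLast (List.cons_ne_nil u xs) = w ∧
          (v :: u :: xs).Nodup := by
    intro x hx
    induction hx using Relation.ReflTransGen.head_induction_on with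
    | refl => intro u xs h1 h2 h3 h4; exact ⟨u, xs, h1, h2, h3, h4⟩
    | @head a c hstep htail ih =>
      intro u xs hd hc hl hn
      by_cases hyc : c ∈ u :: xs
      · -- revisit: truncate the chain at `c`
        obtain ⟨xs', h1, h2, h3⟩ := chain_trunc xs u hc c hyc
        refine ih u xs' hd h1 h2 ?_
        exact hn.sublist (List.Sublist.cons₂ v h3.sublist)
      · have hcv : c ≠ v := hstep.2
        have hcfresh : c ∉ v :: u :: xs := by
          simp only [List.mem_cons] at hyc ⊢; tauto
        obtain ⟨a', n, htr⟩ := hstep.1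
        rcases Nat.eq_zero_or_pos n with hn0 | hnpos
        · -- body step
          subst hn0
          have hb : C.BStep a c := ⟨a', htr⟩
          rcases List.eq_nil_or_concat xs with hxs | ⟨l, b, hxs⟩
          · -- extend the initial Descends
            subst hxs
            have hua : u = a := by simpa using hl
            subst hua
            refine ih c [] ?_ List.Chain.nil (by simp) ?_
            · obtain ⟨u1, he1, hne1, hr1⟩ := hd
              exact ⟨u1, he1, hne1, hr1.tail ⟨hb, hcv⟩⟩
            · simp [Ne.symm hcv]
          · have hxsne : xs ≠ [] := by rw [hxs]; simp
            have hla : xs.getLast hxsne = a := by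
              rw [List.getLast_cons hxsne] at hl; exact hl
            have hrepl : ∀ p ∈ u :: xs, C.Desc p (xs.getLast hxsne) → C.Desc p c := by
              intro p hp hdp
              rw [hla] at hdp
              obtain ⟨β, u1, he1, hne1, hr1⟩ := hdp
              have hcp : c ≠ p := fun hc' =>
                hcfresh (List.mem_cons_of_mem v (hc' ▸ hp))
              exact ⟨β, u1, he1, hne1, hr1.tail ⟨hb, hcp⟩⟩
            refine ih u (xs.dropLast ++ [c]) hd
              (chain_replace_last xs u c hxsne hc hrepl) ?_ ?_
            · rw [List.getLast_cons (by simp)]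
              exact List.getLast_concat
            · have hsub : List.Sublist (v :: u :: xs.dropLast) (v :: u :: xs) :=
                List.Sublist.cons₂ v (List.Sublist.cons₂ u (List.dropLast_sublist xs))
              have hnd : (v :: u :: xs.dropLast).Nodup := hn.sublist hsub
              have hcnot : c ∉ v :: u :: xs.dropLast := fun hmem => hcfresh (hsub.mem hmem)
              have hkey : ((v :: u :: xs.dropLast) ++ [c]).Nodup := by
                rw [List.nodup_append]
                exact ⟨hnd, List.nodup_singleton c, by
                  intro p hp q hq hpq; simp only [List.mem_singleton] at hq; subst hq; subst hpq
                  exact hcnot hp⟩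
              simpa using hkey
        · -- entry step: append a new Desc
          have he' : C.EStep n a c := ⟨hnpos, a', htr⟩
          have hamem : a ∈ u :: xs := hl ▸ List.getLast_mem (List.cons_ne_nil u xs)
          have hca : c ≠ a := fun hce => hyc (hce ▸ hamem)
          have hdesc : C.Desc a c := ⟨n, c, he', hca, Relation.ReflTransGen.refl⟩
          refine ih u (xs ++ [c]) hd (chain_snoc xs u c hc (hl ▸ hdesc)) ?_ ?_
          · exact List.getLast_concat (l := u :: xs)
          · have hkey : ((v :: u :: xs) ++ [c]).Nodup := by
              rw [List.nodup_append]
              exact ⟨hn, List.nodup_singleton c, by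
                intro p hp q hq hpq; simp only [List.mem_singleton] at hq; subst hq; subst hpq
                exact hcfresh hp⟩
            simpa using hkey
  exact main u hpath u [] ⟨u, he, hne, Relation.ReflTransGen.refl⟩ List.Chain.nil
    (by simp) (by simp [Ne.symm hne])
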